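/- arXiv:2009.14319 — 6 statements merged into one kernel-verified Lean document; each statement's English description precedes it below -/
import Mathlib

section
/- Let (V,g) be a Euclidean vector space, 𝔤 ⊆ 𝔰𝔬(V) a Lie subalgebra, and 𝔯 : 𝔤 → 𝔤 a self-adjoint linear operator with eigenvalues λ₁ ≤ … ≤ λ_{dim 𝔤}. Let T be a tensor and suppose there is C ≥ 1 such that |L T|² ≤ (1/C)|T^𝔤|²|L|² for all L ∈ 𝔤, where T^𝔤 is defined by g(L, T^𝔤) = L T and |T^𝔤|² = Σ_α |Ξ_α T|² for an orthonormal eigenbasis {Ξ_α} of 𝔯. If ℓ is an integer with 1 ≤ ℓ ≤ ⌊C⌋, κ ≤ 0, and λ₁ + … + λ_ℓ + (C − ℓ)λ_{ℓ+1} ≥ κ(ℓ+1), then Σ_α λ_α |Ξ_α T|² ≥ (κ(ℓ+1)/C)|T^𝔤|². -/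
/-- Weighted eigenvalue estimation lemma (Lemma 2.4, nonnegative/κ case), abstract version:
`lam 0 ≤ … ≤ lam (N-1)` are the eigenvalues, `a i = |Ξ_i T|²` are nonnegative with
`a i ≤ (1/C) * S` where `S = ∑ a`.  If `1 ≤ ℓ ≤ ⌊C⌋`, `κ ≤ 0` and
`λ₁ + … + λ_ℓ + (C - ℓ)·λ_{ℓ+1} ≥ κ(ℓ+1)`, then `∑ λ_i a_i ≥ (κ(ℓ+1)/C)·S`. -/
theorem weighted_bochner_estimate (N ℓ : ℕ) (C κ : ℝ) (lam a : ℕ → ℝ)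
    (hC : 1 ≤ C) (hκ : κ ≤ 0)
    (hmono : ∀ i j, i ≤ j → j < N → lam i ≤ lam j)
    (ha : ∀ i, i < N → 0 ≤ a i)
    (hbound : ∀ i, i < N → a i ≤ (1 / C) * ∑ j ∈ Finset.range N, a j)
    (hℓ1 : 1 ≤ ℓ) (hℓC : (ℓ : ℤ) ≤ ⌊C⌋) (hℓN : ℓ < N)
    (hlam : ∑ i ∈ Finset.range ℓ, lam i + (C - ℓ) * lam ℓ ≥ κ * (ℓ + 1)) :
    ∑ i ∈ Finset.range N, lam i * a i ≥
      κ * (ℓ + 1) / C * ∑ i ∈ Finset.range N, a i := by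
  set S : ℝ := ∑ j ∈ Finset.range N, a j with hS
  set L : ℝ := ∑ i ∈ Finset.range ℓ, lam i with hL
  set A1 : ℝ := ∑ i ∈ Finset.range ℓ, a i with hA1
  have hC0 : (0:ℝ) < C := lt_of_lt_of_le one_pos hC
  have hC' : C ≠ 0 := ne_of_gt hC0
  have hSnn : 0 ≤ S := Finset.sum_nonneg (fun i hi => ha i (Finset.mem_range.mp hi))
  have hsplit : Finset.range N = Finset.range ℓ ∪ Finset.Ico ℓ N := by
    ext i; simp [Finset.mem_Ico]; omega
  have hdisj : Disjoint (Finset.range ℓ) (Finset.Ico ℓ N) := by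
    rw [Finset.range_eq_Ico]
    exact Finset.Ico_disjoint_Ico_consecutive 0 ℓ N
  have hsum : ∀ f : ℕ → ℝ, ∑ i ∈ Finset.range N, f i
      = ∑ i ∈ Finset.range ℓ, f i + ∑ i ∈ Finset.Ico ℓ N, f i := by
    intro f
    rw [hsplit, Finset.sum_union hdisj]
  have hA : A1 + ∑ i ∈ Finset.Ico ℓ N, a i = S := (hsum a).symm
  -- lower bound on first part
  have h1 : ∑ i ∈ Finset.range ℓ, lam i * a i ≥
      L * (S / C) + lam ℓ * A1 - ℓ * (lam ℓ * (S / C)) := by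
    have expand : ∑ i ∈ Finset.range ℓ, (lam i * (S / C) + lam ℓ * (a i - S / C))
        = L * (S / C) + lam ℓ * A1 - ℓ * (lam ℓ * (S / C)) := by
      rw [Finset.sum_add_distrib, ← Finset.sum_mul, hL]
      have : ∑ i ∈ Finset.range ℓ, lam ℓ * (a i - S / C)
          = lam ℓ * A1 - ℓ * (lam ℓ * (S / C)) := by
        rw [← Finset.mul_sum, Finset.sum_sub_distrib, Finset.sum_const,
          Finset.card_range, nsmul_eq_mul, hA1]
        ring
      rw [this]; ring
    rw [← expand]
    apply Finset.sum_le_sum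
    intro i hi
    have hi' : i < ℓ := Finset.mem_range.mp hi
    have hiN : i < N := hi'.trans hℓN
    have hli : lam i ≤ lam ℓ := hmono i ℓ hi'.le hℓN
    have hai : a i ≤ S / C := by
      calc a i ≤ (1 / C) * S := hbound i hiN
        _ = S / C := by ring
    nlinarith [mul_nonneg (sub_nonneg.mpr hli) (sub_nonneg.mpr hai)]
  have h2 : ∑ i ∈ Finset.Ico ℓ N, lam i * a i ≥ lam ℓ * (S - A1) := by
    have : ∑ i ∈ Finset.Ico ℓ N, lam ℓ * a i ≤ ∑ i ∈ Finset.Ico ℓ N, lam i * a i := by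
      apply Finset.sum_le_sum
      intro i hi
      obtain ⟨h1', h2'⟩ := Finset.mem_Ico.mp hi
      exact mul_le_mul_of_nonneg_right (hmono ℓ i h1' h2') (ha i h2')
    rw [← Finset.mul_sum] at this
    have e3 : ∑ i ∈ Finset.Ico ℓ N, a i = S - A1 := by linarith
    rw [e3] at this
    exact this
  have hc : S / C * C = S := div_mul_cancel₀ S hC'
  calc κ * (ℓ + 1) / C * S = S / C * (κ * (ℓ + 1)) := by ring
    _ ≤ S / C * (L + (C - ℓ) * lam ℓ) :=
        mul_le_mul_of_nonneg_left hlam (div_nonneg hSnn hC0.le)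
    _ = S / C * L + lam ℓ * (S / C * C) - ℓ * (lam ℓ * (S / C)) := by ring
    _ = (L * (S / C) + lam ℓ * A1 - ℓ * (lam ℓ * (S / C))) + lam ℓ * (S - A1) := by
        rw [hc]; ring
    _ ≤ ∑ i ∈ Finset.range ℓ, lam i * a i + ∑ i ∈ Finset.Ico ℓ N, lam i * a i :=
        add_le_add h1 h2
    _ = ∑ i ∈ Finset.range N, lam i * a i := (hsum _).symm
end

section
/- Let λ₁ ≤ … ≤ λ_N be real numbers and a₁, …, a_N nonnegative reals with total sum S = Σ a_α, and suppose a_α ≤ S/C for all α, where C ≥ 1 is real. If ℓ is an integer with 1 ≤ ℓ ≤ ⌊C⌋ and λ₁ + … + λ_ℓ + (C − ℓ)λ_{ℓ+1} > 0, then Σ_α λ_α a_α > 0 unless S = 0. -/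
/-- Strict case of the weighted eigenvalue estimation lemma (Lemma 2.4):
if `λ₁ + … + λ_ℓ + (C - ℓ)·λ_{ℓ+1} > 0` then `∑ λ_i a_i > 0` unless `S = ∑ a_i = 0`. -/
theorem weighted_bochner_estimate_pos (N ℓ : ℕ) (C : ℝ) (lam a : ℕ → ℝ)
    (hC : 1 ≤ C)
    (hmono : ∀ i j, i ≤ j → j < N → lam i ≤ lam j)
    (ha : ∀ i, i < N → 0 ≤ a i)
    (hbound : ∀ i, i < N → a i ≤ (∑ j ∈ Finset.range N, a j) / C)
    (hℓ1 : 1 ≤ ℓ) (hℓC : (ℓ : ℤ) ≤ ⌊C⌋) (hℓN : ℓ < N)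
    (hlam : ∑ i ∈ Finset.range ℓ, lam i + (C - ℓ) * lam ℓ > 0)
    (hS : ∑ i ∈ Finset.range N, a i ≠ 0) :
    ∑ i ∈ Finset.range N, lam i * a i > 0 := by
  set S := ∑ j ∈ Finset.range N, a j with hSdef
  have hC0 : (0:ℝ) < C := lt_of_lt_of_le one_pos hC
  have hS0 : 0 < S :=
    lt_of_le_of_ne (Finset.sum_nonneg fun i hi => ha i (Finset.mem_range.mp hi)) (Ne.symm hS)
  -- split the centered sum
  have hsplit : ∑ i ∈ Finset.range ℓ, (lam i - lam ℓ) * a i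
      + ∑ i ∈ Finset.Ico ℓ N, (lam i - lam ℓ) * a i
      = ∑ i ∈ Finset.range N, (lam i - lam ℓ) * a i :=
    Finset.sum_range_add_sum_Ico _ (le_of_lt hℓN)
  have h1 : ∑ i ∈ Finset.range ℓ, (lam i - lam ℓ) * (S / C)
      ≤ ∑ i ∈ Finset.range ℓ, (lam i - lam ℓ) * a i := by
    apply Finset.sum_le_sum
    intro i hi
    have hiℓ : i < ℓ := Finset.mem_range.mp hi
    have hiN : i < N := lt_trans hiℓ hℓN
    have hle : lam i - lam ℓ ≤ 0 :=
      sub_nonpos.mpr (hmono i ℓ (le_of_lt hiℓ) hℓN)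
    exact mul_le_mul_of_nonpos_left (hbound i hiN) hle
  have h2 : (0:ℝ) ≤ ∑ i ∈ Finset.Ico ℓ N, (lam i - lam ℓ) * a i := by
    apply Finset.sum_nonneg
    intro i hi
    obtain ⟨h1i, h2i⟩ := Finset.mem_Ico.mp hi
    exact mul_nonneg (sub_nonneg.mpr (hmono ℓ i h1i h2i)) (ha i h2i)
  have hcent : ∑ i ∈ Finset.range N, (lam i - lam ℓ) * a i
      = ∑ i ∈ Finset.range N, lam i * a i - lam ℓ * S := by
    rw [hSdef, Finset.mul_sum, ← Finset.sum_sub_distrib]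
    apply Finset.sum_congr rfl
    intro i _
    ring
  have hcent2 : ∑ i ∈ Finset.range ℓ, (lam i - lam ℓ) * (S / C)
      = (∑ i ∈ Finset.range ℓ, lam i - ℓ * lam ℓ) * (S / C) := by
    rw [← Finset.sum_mul, Finset.sum_sub_distrib, Finset.sum_const, Finset.card_range,
      nsmul_eq_mul]
  have hkey : (∑ i ∈ Finset.range ℓ, lam i - ℓ * lam ℓ) * (S / C) + lam ℓ * S
      ≤ ∑ i ∈ Finset.range N, lam i * a i := by
    have := le_trans (le_add_of_nonneg_right h2) (by linarith [h1] :
      ∑ i ∈ Finset.range ℓ, (lam i - lam ℓ) * (S / C) + ∑ i ∈ Finset.Ico ℓ N, (lam i - lam ℓ) * a i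
      ≤ ∑ i ∈ Finset.range ℓ, (lam i - lam ℓ) * a i + ∑ i ∈ Finset.Ico ℓ N, (lam i - lam ℓ) * a i)
    rw [hsplit, hcent, hcent2] at this
    linarith
  have hpos : 0 < (∑ i ∈ Finset.range ℓ, lam i + (C - ℓ) * lam ℓ) * (S / C) :=
    mul_pos hlam (div_pos hS0 hC0)
  have heq : (∑ i ∈ Finset.range ℓ, lam i + (C - ℓ) * lam ℓ) * (S / C)
      = (∑ i ∈ Finset.range ℓ, lam i - ℓ * lam ℓ) * (S / C) + lam ℓ * S := by
    field_simp
    ring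
  linarith [hkey, hpos, heq]
end

section
/- With σ_j the j-th elementary symmetric polynomial in ε₁, …, ε_n and τ_{a,b} := σ_{n−a+1}σ_{n−b} − σ_{n−a}σ_{n−b+1}, one has ∏_{i=1}^n (s − ε_i) · ∏_{i=1}^n (t − ε_i) · (s − t) = Σ_{a,b=0}^{n+1} (−1)^{a+b+1} s^a t^b τ_{a,b}, and in particular τ_{a,b} = −τ_{b,a}. -/
/-- The `j`-th elementary symmetric polynomial in `ε₁, …, ε_n`, defined for an
integer index `j`, with the convention `σ_j = 0` for `j < 0` (and automatically
`σ_j = 0` for `j > n`). -/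
noncomputable def esymmZ {R : Type*} [CommRing R] {n : ℕ} (ε : Fin n → R) (j : ℤ) : R :=
  if hj : 0 ≤ j then
    ∑ A ∈ Finset.univ.powersetCard j.toNat, ∏ i ∈ A, ε i
  else 0

/-- `τ_{a,b} = σ_{n-a+1} σ_{n-b} - σ_{n-a} σ_{n-b+1}`. -/
noncomputable def tauZ {R : Type*} [CommRing R] {n : ℕ} (ε : Fin n → R) (a b : ℤ) : R :=
  esymmZ ε ((n : ℤ) - a + 1) * esymmZ ε ((n : ℤ) - b) -
    esymmZ ε ((n : ℤ) - a) * esymmZ ε ((n : ℤ) - b + 1)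

section aux
variable {R : Type*} [CommRing R] {n : ℕ} (ε : Fin n → R)

lemma esymmZ_natCast (j : ℕ) :
    esymmZ ε (j : ℤ) = ∑ A ∈ Finset.univ.powersetCard j, ∏ i ∈ A, ε i := by
  simp [esymmZ]

lemma esymmZ_neg {j : ℤ} (hj : j < 0) : esymmZ ε j = 0 :=
  dif_neg (not_le.mpr hj)

lemma esymmZ_gt {j : ℤ} (hj : (n : ℤ) < j) : esymmZ ε j = 0 := by
  have h0 : 0 ≤ j := le_of_lt (lt_of_le_of_lt (Int.ofNat_nonneg n) hj)
  have hn : (Finset.univ : Finset (Fin n)).card < j.toNat := by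
    simp only [Finset.card_univ, Fintype.card_fin]
    omega
  rw [esymmZ, dif_pos h0, Finset.powersetCard_eq_empty.mpr hn, Finset.sum_empty]

lemma esymmZ_eq_multiset (j : ℕ) :
    esymmZ ε (j : ℤ) = (Finset.univ.val.map ε).esymm j := by
  rw [esymmZ_natCast, Finset.esymm_map_val]

lemma prod_sub_eq (x : R) :
    ∏ i : Fin n, (x - ε i) =
      (-1 : R) ^ n * ∑ a ∈ Finset.range (n + 2),
        (-1 : R) ^ a * esymmZ ε ((n : ℤ) - a) * x ^ a := by
  have hM : Multiset.card (Finset.univ.val.map ε) = n := by simp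
  have h := congrArg (Polynomial.eval x) (Multiset.prod_X_sub_X_eq_sum_esymm (Finset.univ.val.map ε))
  rw [Polynomial.eval_multiset_prod, Multiset.map_map] at h
  simp only [Function.comp, Polynomial.eval_sub, Polynomial.eval_X, Polynomial.eval_C,
    Polynomial.eval_finset_sum, Polynomial.eval_mul, Polynomial.eval_pow,
    Polynomial.eval_neg, Polynomial.eval_one, hM] at h
  have hL : ∏ i : Fin n, (x - ε i) = ((Finset.univ.val.map ε).map fun t => x - t).prod := by
    rw [Multiset.map_map, Finset.prod_eq_multiset_prod]
    rfl
  rw [hL, h]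
  conv_rhs => rw [Finset.sum_range_succ]
  have hz : esymmZ ε ((n : ℤ) - ((n + 1 : ℕ) : ℤ)) = 0 := by
    apply esymmZ_neg; push_cast; omega
  rw [hz, mul_zero, zero_mul, add_zero,
    ← Finset.sum_range_reflect (fun a => (-1 : R) ^ a * esymmZ ε ((n : ℤ) - a) * x ^ a) (n + 1),
    Finset.mul_sum]
  apply Finset.sum_congr rfl
  intro j hj
  rw [Finset.mem_range] at hj
  have hj' : j ≤ n := by omega
  have h1 : n + 1 - 1 - j = n - j := by omega
  have h2 : ((n - j : ℕ) : ℤ) = (n : ℤ) - j := by omega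
  have h3 : (n : ℤ) - ((n - j : ℕ) : ℤ) = (j : ℤ) := by omega
  simp only [h1, h3]
  rw [← esymmZ_eq_multiset]
  have h4 : n + (n - j) = j + 2 * (n - j) := by omega
  have h5 : ((-1 : R) ^ n * (-1 : R) ^ (n - j)) = (-1 : R) ^ j := by
    rw [← pow_add, h4, pow_add, pow_mul, neg_one_sq, one_pow, mul_one]
  linear_combination (-(esymmZ ε (j : ℤ) * x ^ (n - j))) * h5

lemma shift_sum (x : R) :
    (∑ a ∈ Finset.range (n + 2), (-1 : R) ^ a * esymmZ ε ((n : ℤ) - a) * x ^ a) * x =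
      ∑ a ∈ Finset.range (n + 2), (-1 : R) ^ (a + 1) * esymmZ ε ((n : ℤ) - a + 1) * x ^ a := by
  rw [Finset.sum_mul]
  rw [Finset.sum_range_succ' (fun a => (-1 : R) ^ (a + 1) * esymmZ ε ((n : ℤ) - a + 1) * x ^ a)]
  rw [Finset.sum_range_succ (fun a => (-1 : R) ^ a * esymmZ ε ((n : ℤ) - a) * x ^ a * x)]
  have hz1 : esymmZ ε ((n : ℤ) - (n + 1 : ℕ)) = 0 := by apply esymmZ_neg; push_cast; omega
  have hz2 : esymmZ ε ((n : ℤ) - (0 : ℕ) + 1) = 0 := by apply esymmZ_gt; push_cast; omega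
  rw [hz1, hz2]
  simp only [mul_zero, zero_mul, add_zero]
  apply Finset.sum_congr rfl
  intro a _
  have : (n : ℤ) - (a + 1 : ℕ) + 1 = (n : ℤ) - a := by push_cast; ring
  rw [this, pow_succ, pow_succ]
  ring

end aux

/-- `∏ (s - εᵢ) · ∏ (t - εᵢ) · (s - t) = Σ_{a,b=0}^{n+1} (-1)^{a+b+1} s^a t^b τ_{a,b}`,
and `τ` is antisymmetric. -/
theorem prod_sub_mul_prod_sub_eq_sum_tau {R : Type*} [CommRing R] (n : ℕ)
    (s t : R) (ε : Fin n → R) :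
    ((∏ i : Fin n, (s - ε i)) * (∏ i : Fin n, (t - ε i)) * (s - t) =
      ∑ a ∈ Finset.range (n + 2), ∑ b ∈ Finset.range (n + 2),
        (-1 : R) ^ (a + b + 1) * s ^ a * t ^ b * tauZ ε a b) ∧
    (∀ a b : ℤ, tauZ ε a b = -tauZ ε b a) := by
  constructor
  · set E : R → ℕ → R := fun x a => (-1 : R) ^ a * esymmZ ε ((n : ℤ) - a) * x ^ a with hE
    set F : R → ℕ → R := fun x a => (-1 : R) ^ (a + 1) * esymmZ ε ((n : ℤ) - a + 1) * x ^ a with hF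
    have key : ∀ a b : ℕ,
        (-1 : R) ^ (a + b + 1) * s ^ a * t ^ b * tauZ ε a b
          = F s a * E t b - E s a * F t b := by
      intro a b
      simp only [hE, hF, tauZ]
      push_cast
      ring
    calc (∏ i : Fin n, (s - ε i)) * (∏ i : Fin n, (t - ε i)) * (s - t)
        = ((∑ a ∈ Finset.range (n + 2), E s a) * s) * (∑ b ∈ Finset.range (n + 2), E t b)
          - (∑ a ∈ Finset.range (n + 2), E s a) * ((∑ b ∈ Finset.range (n + 2), E t b) * t) := by
          rw [prod_sub_eq ε s, prod_sub_eq ε t]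
          have : ((-1 : R) ^ n) * ((-1 : R) ^ n) = 1 := by
            rw [← pow_add, ← two_mul, pow_mul, neg_one_sq, one_pow]
          calc ((-1:R)^n * ∑ a ∈ Finset.range (n+2), E s a) * ((-1:R)^n * ∑ b ∈ Finset.range (n+2), E t b) * (s - t)
              = (((-1:R)^n) * ((-1:R)^n)) * ((∑ a ∈ Finset.range (n+2), E s a) * (∑ b ∈ Finset.range (n+2), E t b) * (s - t)) := by ring
            _ = _ := by rw [this]; ring
      _ = (∑ a ∈ Finset.range (n + 2), F s a) * (∑ b ∈ Finset.range (n + 2), E t b)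
          - (∑ a ∈ Finset.range (n + 2), E s a) * (∑ b ∈ Finset.range (n + 2), F t b) := by
          rw [shift_sum, shift_sum]
      _ = ∑ a ∈ Finset.range (n + 2), ∑ b ∈ Finset.range (n + 2),
            (F s a * E t b - E s a * F t b) := by
          rw [Finset.sum_mul_sum, Finset.sum_mul_sum, ← Finset.sum_sub_distrib]
          exact Finset.sum_congr rfl fun a _ => by rw [← Finset.sum_sub_distrib]
      _ = _ := by
          exact Finset.sum_congr rfl fun a _ => Finset.sum_congr rfl fun b _ => (key a b).symm
  · intro a b
    simp only [tauZ]
    ring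
end

section
/- Let χ^{p,q} = Σ_{I_p, J_q} ε_{I_p} \bar{ε}_{J_q}, where the sum is over subsets I_p ⊆ {1,…,n} of size p and J_q ⊆ {1,…,n} of size q, ε_{I} = ∏_{i∈I} ε_i and \bar{ε}_{J} = ∏_{j∈J} ε_j^{−1}, with ε_i on the unit circle (or invertible elements with \bar{ε}_i = ε_i^{−1}). Then χ^{p,q} − χ^{p−1,q−1} = (σ_p σ_{n−q} − σ_{p−1} σ_{n−q+1}) / (ε₁⋯ε_n), where σ_j is the j-th elementary symmetric polynomial in ε₁, …, ε_n. -/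
open Finset

lemma chi_aux (K : Type*) [Field K] (n q : ℕ) (hqn : q ≤ n) (ε : Fin n → K)
    (hε : ∀ i, ε i ≠ 0) :
    ∑ J ∈ univ.powersetCard q, ∏ j ∈ J, (ε j)⁻¹ =
      (∑ A ∈ univ.powersetCard (n - q), ∏ i ∈ A, ε i) / ∏ i : Fin n, ε i := by
  have hP : (∏ i : Fin n, ε i) ≠ 0 := Finset.prod_ne_zero_iff.2 fun i _ => hε i
  rw [eq_div_iff hP, Finset.sum_mul]
  refine Finset.sum_nbij' (fun J => univ \ J) (fun A => univ \ A) ?_ ?_ ?_ ?_ ?_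
  · intro J hJ
    simp only [mem_powersetCard_univ] at hJ ⊢
    rw [card_sdiff_of_subset (subset_univ J), card_univ, Fintype.card_fin, hJ]
  · intro A hA
    simp only [mem_powersetCard_univ] at hA ⊢
    rw [card_sdiff_of_subset (subset_univ A), card_univ, Fintype.card_fin, hA]
    omega
  · intro J _; simp
  · intro A _; simp
  · intro J hJ
    have h : (∏ i ∈ univ \ J, ε i) * ∏ j ∈ J, ε j = ∏ i : Fin n, ε i :=
      Finset.prod_sdiff (subset_univ J)
    have hJP : (∏ j ∈ J, ε j) ≠ 0 := Finset.prod_ne_zero_iff.2 fun i _ => hε i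
    rw [← h, Finset.prod_inv_distrib]
    field_simp

/-- `χ^{p,q} - χ^{p-1,q-1} = (σ_p σ_{n-q} - σ_{p-1} σ_{n-q+1}) / (ε₁⋯ε_n)`, where
`χ^{p,q} = Σ_{|I|=p, |J|=q} ε_I \bar{ε}_J` with `\bar{ε}_j = ε_j⁻¹` and `σ_j` the
elementary symmetric polynomials of `ε₁, …, ε_n`. -/
theorem chi_diff_eq (K : Type*) [Field K] (n p q : ℕ) (hp : 1 ≤ p) (hpn : p ≤ n)
    (hq : 1 ≤ q) (hqn : q ≤ n) (ε : Fin n → K) (hε : ∀ i, ε i ≠ 0) :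
    (∑ I ∈ univ.powersetCard p, ∑ J ∈ univ.powersetCard q,
        (∏ i ∈ I, ε i) * ∏ j ∈ J, (ε j)⁻¹) -
      (∑ I ∈ univ.powersetCard (p - 1), ∑ J ∈ univ.powersetCard (q - 1),
        (∏ i ∈ I, ε i) * ∏ j ∈ J, (ε j)⁻¹) =
    ((∑ A ∈ univ.powersetCard p, ∏ i ∈ A, ε i) *
        (∑ A ∈ univ.powersetCard (n - q), ∏ i ∈ A, ε i) -
      (∑ A ∈ univ.powersetCard (p - 1), ∏ i ∈ A, ε i) *
        (∑ A ∈ univ.powersetCard (n - q + 1), ∏ i ∈ A, ε i)) / ∏ i : Fin n, ε i := by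
  have h1 : n - (q - 1) = n - q + 1 := by omega
  have e1 := chi_aux K n q hqn ε hε
  have e2 := chi_aux K n (q - 1) (by omega) ε hε
  rw [h1] at e2
  simp only [← Finset.sum_mul, ← Finset.mul_sum] at *
  rw [e1, e2]
  ring
end

section
/- The character of the space of (p,q)-forms Λ^{p,q} V* = Λ^p V* ⊗ Λ^q \bar{V}* under the diagonal torus of U(n) admits the decomposition χ^{p,q} = Σ_{k=0}^{min{p,q}} C(n − (p+q−2k), k) Σ_{I_{p−k} ∩ J_{q−k} = ∅} ε_{I_{p−k}} \bar{ε}_{J_{q−k}}, where the inner sum is over disjoint subsets I of size p−k and J of size q−k of {1,…,n}, and C(m, k) is the binomial coefficient. -/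
open Finset

/-- Decomposition of the character `χ^{p,q}` of the torus of `U(n)` on `(p,q)`-forms:
`χ^{p,q} = Σ_{k=0}^{min(p,q)} C(n-(p+q-2k), k) Σ_{I ∩ J = ∅, |I|=p-k, |J|=q-k} ε_I \bar{ε}_J`. -/
theorem chi_pq_decomposition (K : Type*) [Field K] (n p q : ℕ) (hpn : p ≤ n) (hqn : q ≤ n)
    (ε : Fin n → K) (hε : ∀ i, ε i ≠ 0) :
    ∑ I ∈ univ.powersetCard p, ∑ J ∈ univ.powersetCard q,
        (∏ i ∈ I, ε i) * ∏ j ∈ J, (ε j)⁻¹ =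
      ∑ k ∈ range (min p q + 1),
        ((n - (p + q - 2 * k)).choose k : K) *
          ∑ I ∈ univ.powersetCard (p - k), ∑ J ∈ univ.powersetCard (q - k),
            if Disjoint I J then (∏ i ∈ I, ε i) * ∏ j ∈ J, (ε j)⁻¹ else 0 := by
  classical
  set g : Finset (Fin n) → Finset (Fin n) → K :=
    fun I J => (∏ i ∈ I, ε i) * ∏ j ∈ J, (ε j)⁻¹ with hg
  -- value invariance under removing the common part
  have gval : ∀ I J : Finset (Fin n), g I J = g (I \ J) (J \ I) := by
    intro I J
    have hone : (∏ i ∈ I ∩ J, ε i) * ∏ i ∈ I ∩ J, (ε i)⁻¹ = 1 := by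
      rw [← prod_mul_distrib]
      exact prod_eq_one fun i _ => mul_inv_cancel₀ (hε i)
    have h1 : (∏ i ∈ I, ε i) = (∏ i ∈ I \ J, ε i) * ∏ i ∈ I ∩ J, ε i := by
      rw [← prod_sdiff (inter_subset_left : I ∩ J ⊆ I), sdiff_inter_self_left]
    have h2 : (∏ j ∈ J, (ε j)⁻¹) = (∏ j ∈ J \ I, (ε j)⁻¹) * ∏ j ∈ I ∩ J, (ε j)⁻¹ := by
      rw [← prod_sdiff (inter_subset_right : I ∩ J ⊆ J), sdiff_inter_self_right, inter_comm]
    simp only [hg]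
    rw [h1, h2, mul_mul_mul_comm, hone, mul_one]
  -- Step B: rewrite each RHS summand as a sum over triples
  have hRHS : ∀ k ∈ range (min p q + 1),
      ((n - (p + q - 2 * k)).choose k : K) *
        ∑ I ∈ univ.powersetCard (p - k), ∑ J ∈ univ.powersetCard (q - k),
          (if Disjoint I J then g I J else 0)
      = ∑ x ∈ ((univ.powersetCard (p - k) ×ˢ univ.powersetCard (q - k)).filter
          (fun x => Disjoint x.1 x.2)),
          ∑ S ∈ ((x.1 ∪ x.2)ᶜ).powersetCard k, g x.1 x.2 := by
    intro k hk
    rw [mem_range, Nat.lt_succ_iff, le_min_iff] at hk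
    rw [← sum_product' (f := fun I J => if Disjoint I J then g I J else 0), ← sum_filter]
    rw [mul_sum]
    refine sum_congr rfl fun x hx => ?_
    rw [mem_filter, mem_product, mem_powersetCard_univ, mem_powersetCard_univ] at hx
    obtain ⟨⟨hc1, hc2⟩, hd⟩ := hx
    have hcard : ((x.1 ∪ x.2)ᶜ).card = n - (p + q - 2 * k) := by
      rw [card_compl, card_union_of_disjoint hd, hc1, hc2, Fintype.card_fin]
      congr 1
      omega
    rw [sum_const, card_powersetCard, hcard, nsmul_eq_mul, Nat.cast_comm]
  calc
    ∑ I ∈ univ.powersetCard p, ∑ J ∈ univ.powersetCard q, g I J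
        = ∑ x ∈ (univ.powersetCard p ×ˢ univ.powersetCard q), g x.1 x.2 :=
          (sum_product' (univ.powersetCard p) (univ.powersetCard q) (fun I J => g I J)).symm
    _ = ∑ y ∈ (range (min p q + 1)).sigma (fun k =>
            (((univ.powersetCard (p - k)) ×ˢ (univ.powersetCard (q - k))).filter
              (fun x => Disjoint x.1 x.2)).sigma
              (fun x => ((x.1 ∪ x.2)ᶜ).powersetCard k)),
          g y.2.1.1 y.2.1.2 := by
      refine sum_nbij' (fun x => ⟨(x.1 ∩ x.2).card, ⟨(x.1 \ x.2, x.2 \ x.1), x.1 ∩ x.2⟩⟩)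
        (fun y => (y.2.1.1 ∪ y.2.2, y.2.1.2 ∪ y.2.2)) ?_ ?_ ?_ ?_ ?_
      · rintro ⟨I, J⟩ hx
        rw [mem_product, mem_powersetCard_univ, mem_powersetCard_univ] at hx
        obtain ⟨hI, hJ⟩ := hx
        dsimp only at hI hJ
        have e1 : (I ∩ J).card + (I \ J).card = I.card := card_inter_add_card_sdiff I J
        have e2 : (J ∩ I).card + (J \ I).card = J.card := card_inter_add_card_sdiff J I
        rw [inter_comm] at e2
        have h1 : (I ∩ J).card ≤ I.card := card_le_card inter_subset_left
        have h2 : (I ∩ J).card ≤ J.card := card_le_card inter_subset_right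
        simp only [mem_sigma, mem_range, mem_filter, mem_product, mem_powersetCard_univ,
          mem_powersetCard]
        refine ⟨by omega, ⟨⟨?_, ?_⟩, disjoint_sdiff_sdiff⟩, ?_, trivial⟩
        · exact ⟨subset_univ _, by omega⟩
        · exact ⟨subset_univ _, by omega⟩
        intro a ha
        rw [mem_inter] at ha
        rw [mem_compl, mem_union, mem_sdiff, mem_sdiff]
        tauto
      · rintro ⟨k, ⟨⟨I', J'⟩, S⟩⟩ hy
        dsimp only at hy ⊢
        rw [mem_sigma, mem_sigma, mem_range, mem_filter, mem_product, mem_powersetCard_univ,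
          mem_powersetCard_univ, mem_powersetCard] at hy
        obtain ⟨hk, ⟨⟨hI', hJ'⟩, hd⟩, hS, hSk⟩ := hy
        rw [Nat.lt_succ_iff, le_min_iff] at hk
        have hdI : Disjoint I' S := by
          refine disjoint_left.mpr fun a haI haS => ?_
          have := hS haS; rw [mem_compl, mem_union] at this; tauto
        have hdJ : Disjoint J' S := by
          refine disjoint_left.mpr fun a haJ haS => ?_
          have := hS haS; rw [mem_compl, mem_union] at this; tauto
        rw [mem_product, mem_powersetCard_univ, mem_powersetCard_univ]
        constructor
        · rw [card_union_of_disjoint hdI, hI', hSk]; omega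
        · rw [card_union_of_disjoint hdJ, hJ', hSk]; omega
      · rintro ⟨I, J⟩ hx
        dsimp only
        simp only [Prod.mk.injEq]
        exact ⟨sdiff_union_inter I J, by rw [inter_comm]; exact sdiff_union_inter J I⟩
      · rintro ⟨k, ⟨⟨I', J'⟩, S⟩⟩ hy
        dsimp only at hy ⊢
        rw [mem_sigma, mem_sigma, mem_range, mem_filter, mem_product, mem_powersetCard_univ,
          mem_powersetCard_univ, mem_powersetCard] at hy
        obtain ⟨hk, ⟨⟨hI', hJ'⟩, hd⟩, hS, hSk⟩ := hy
        have hclean : ∀ a, a ∈ S → a ∉ I' ∧ a ∉ J' := by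
          intro a ha
          have := hS ha; rw [mem_compl, mem_union] at this; tauto
        have h1 : (I' ∪ S) ∩ (J' ∪ S) = S := by
          ext a
          simp only [mem_inter, mem_union]
          constructor
          · rintro ⟨h1 | h1, h2 | h2⟩ <;> first
              | exact absurd h2 (disjoint_left.mp hd h1)
              | assumption
          · intro h; tauto
        have h2 : (I' ∪ S) \ (J' ∪ S) = I' := by
          ext a
          simp only [mem_sdiff, mem_union, not_or]
          constructor
          · rintro ⟨h1 | h1, h2, h3⟩ <;> tauto
          · intro h
            exact ⟨Or.inl h, disjoint_left.mp hd h, fun hs => (hclean a hs).1 h⟩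
        have h3 : (J' ∪ S) \ (I' ∪ S) = J' := by
          ext a
          simp only [mem_sdiff, mem_union, not_or]
          constructor
          · rintro ⟨h1 | h1, h2, h3⟩ <;> tauto
          · intro h
            exact ⟨Or.inl h, disjoint_left.mp hd.symm h, fun hs => (hclean a hs).2 h⟩
        simp only [h1, h2, h3, hSk]
      · rintro ⟨I, J⟩ hx
        exact gval I J
    _ = ∑ k ∈ range (min p q + 1),
          ((n - (p + q - 2 * k)).choose k : K) *
            ∑ I ∈ univ.powersetCard (p - k), ∑ J ∈ univ.powersetCard (q - k),
              (if Disjoint I J then g I J else 0) := by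
      rw [sum_sigma]
      refine sum_congr rfl fun k hk => ?_
      rw [hRHS k hk, sum_sigma]
end

section
/- Let 𝔯 : 𝔤 → 𝔤 be a self-adjoint operator on a Lie subalgebra 𝔤 ⊆ 𝔰𝔬(V) with orthonormal eigenbasis {Ξ_α} and eigenvalues {λ_α}, and let R be the corresponding symmetric bilinear form on 𝔤. Then for L ∈ 𝔤, |LR|² = 2 Σ_{α<β} (λ_α − λ_β)² g([L, Ξ_α], Ξ_β)², where L acts on R as a (0,4)-tensor/bilinear form by the natural derivative action. -/
open Matrix

/-- The inner product on `Λ²ℝ^m ≅ 𝔰𝔬(m)`: `⟨A, B⟩ = ½ tr(Aᵀ B)`. -/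
noncomputable def form2IP {m : ℕ} (A B : Matrix (Fin m) (Fin m) ℝ) : ℝ :=
  (1 / 2) * (Aᵀ * B).trace

/-- For a self-adjoint operator `𝔯` on a Lie subalgebra `𝔤 ⊆ 𝔰𝔬(m)` with orthonormal
eigenbasis `{Ξ_α}` and eigenvalues `{λ_α}`, with corresponding symmetric bilinear form
`R(X,Y) = Σ_γ λ_γ ⟨X, Ξ_γ⟩⟨Y, Ξ_γ⟩`, and `L ∈ 𝔤` acting by
`(LR)(X,Y) = -R([L,X],Y) - R(X,[L,Y])`, one has
`|LR|² = 2 Σ_{α<β} (λ_α - λ_β)² g([L,Ξ_α], Ξ_β)²`. -/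
theorem norm_sq_LR (m N : ℕ) (Ξ : Fin N → Matrix (Fin m) (Fin m) ℝ) (lam : Fin N → ℝ)
    (hskew : ∀ α, (Ξ α)ᵀ = -Ξ α)
    (horth : ∀ α β, form2IP (Ξ α) (Ξ β) = if α = β then 1 else 0)
    (L : Matrix (Fin m) (Fin m) ℝ)
    (hL : L ∈ Submodule.span ℝ (Set.range Ξ))
    (hclosed : ∀ α, L * Ξ α - Ξ α * L ∈ Submodule.span ℝ (Set.range Ξ)) :
    ∑ α : Fin N, ∑ β : Fin N,
        (-(∑ γ : Fin N, lam γ * form2IP (L * Ξ α - Ξ α * L) (Ξ γ) * form2IP (Ξ β) (Ξ γ)) -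
          ∑ γ : Fin N, lam γ * form2IP (Ξ α) (Ξ γ) * form2IP (L * Ξ β - Ξ β * L) (Ξ γ)) ^ 2 =
      2 * ∑ α : Fin N, ∑ β ∈ Finset.Ioi α,
        (lam α - lam β) ^ 2 * (form2IP (L * Ξ α - Ξ α * L) (Ξ β)) ^ 2 := by
  clear hclosed
  have hLskew : Lᵀ = -L := by
    induction hL using Submodule.span_induction with
    | mem x hx => obtain ⟨α, rfl⟩ := hx; exact hskew α
    | zero => simp
    | add x y _ _ hx hy => rw [Matrix.transpose_add, hx, hy, neg_add]
    | smul c x _ hx => rw [Matrix.transpose_smul, hx, smul_neg]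
  set c : Fin N → Fin N → ℝ := fun α β => form2IP (L * Ξ α - Ξ α * L) (Ξ β) with hc
  have hanti : ∀ α β, c α β = -c β α := by
    intro α β
    have : c α β + c β α = 0 := by
      simp only [hc, form2IP, Matrix.transpose_sub, Matrix.transpose_mul, hLskew, hskew,
        Matrix.neg_mul, Matrix.mul_neg, neg_neg, Matrix.sub_mul, Matrix.trace_sub,
        Matrix.mul_assoc]
      rw [Matrix.trace_mul_comm (Ξ α) (L * Ξ β), Matrix.trace_mul_comm (Ξ β) (L * Ξ α),
        Matrix.mul_assoc, Matrix.mul_assoc]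
      ring
    linarith
  have key : ∀ α β : Fin N,
      (-(∑ γ : Fin N, lam γ * form2IP (L * Ξ α - Ξ α * L) (Ξ γ) * form2IP (Ξ β) (Ξ γ)) -
        ∑ γ : Fin N, lam γ * form2IP (Ξ α) (Ξ γ) * form2IP (L * Ξ β - Ξ β * L) (Ξ γ)) ^ 2 =
      (lam α - lam β) ^ 2 * (c α β) ^ 2 := by
    intro α β
    have h1 : ∑ γ : Fin N, lam γ * form2IP (L * Ξ α - Ξ α * L) (Ξ γ) * form2IP (Ξ β) (Ξ γ)
        = lam β * c α β := by
      rw [Finset.sum_eq_single β]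
      · simp [horth, hc]
      · intro γ _ hγ; simp [horth, (Ne.symm hγ)]
      · simp
    have h2 : ∑ γ : Fin N, lam γ * form2IP (Ξ α) (Ξ γ) * form2IP (L * Ξ β - Ξ β * L) (Ξ γ)
        = lam α * c β α := by
      rw [Finset.sum_eq_single α]
      · simp [horth, hc]
      · intro γ _ hγ; simp [horth, Ne.symm hγ]
      · simp
    rw [h1, h2, hanti β α]
    ring
  simp only [key]
  -- now split the double sum
  have hsymm : ∀ α β : Fin N, (lam α - lam β) ^ 2 * c α β ^ 2 = (lam β - lam α) ^ 2 * c β α ^ 2 := by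
    intro α β; rw [hanti α β]; ring
  have hdiag : ∀ α : Fin N, (lam α - lam α) ^ 2 * c α α ^ 2 = 0 := by intro α; ring
  have split : ∀ α : Fin N, (Finset.univ : Finset (Fin N)) =
      (Finset.Ioi α) ∪ (Finset.Iio α) ∪ {α} := by
    intro α; ext β; simp [Finset.mem_Ioi, Finset.mem_Iio, lt_or_gt_of_ne]
    exact lt_or_ge α β
  calc ∑ α : Fin N, ∑ β : Fin N, (lam α - lam β) ^ 2 * c α β ^ 2
      = ∑ α : Fin N, ((∑ β ∈ Finset.Ioi α, (lam α - lam β) ^ 2 * c α β ^ 2)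
        + ∑ β ∈ Finset.Iio α, (lam α - lam β) ^ 2 * c α β ^ 2) := by
        refine Finset.sum_congr rfl fun α _ => ?_
        rw [split α, Finset.sum_union, Finset.sum_union]
        · simp [hdiag]
        · rw [Finset.disjoint_left]
          intro b hb hb'
          simp only [Finset.mem_Ioi] at hb
          simp only [Finset.mem_Iio] at hb'
          exact absurd hb' hb.asymm
        · rw [Finset.disjoint_right]
          intro b hb
          simp only [Finset.mem_singleton] at hb
          subst hb
          simp
    _ = 2 * ∑ α : Fin N, ∑ β ∈ Finset.Ioi α, (lam α - lam β) ^ 2 * c α β ^ 2 := by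
        rw [Finset.sum_add_distrib]
        have : ∑ α : Fin N, ∑ β ∈ Finset.Iio α, (lam α - lam β) ^ 2 * c α β ^ 2
            = ∑ α : Fin N, ∑ β ∈ Finset.Ioi α, (lam α - lam β) ^ 2 * c α β ^ 2 := by
          rw [Finset.sum_sigma', Finset.sum_sigma']
          refine Finset.sum_nbij' (fun x => ⟨x.2, x.1⟩) (fun x => ⟨x.2, x.1⟩) ?_ ?_
            (fun _ _ => rfl) (fun _ _ => rfl) (fun x hx => hsymm _ _) <;>
          · rintro ⟨a, b⟩ h
            simp only [Finset.mem_sigma, Finset.mem_univ, Finset.mem_Iio, Finset.mem_Ioi,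
              true_and] at h ⊢
            exact h
        rw [this]; ring
end
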